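/- Let d ≥ 2, 2 ≤ k ≤ d, and β = (k + √(k(d+1)(d+2−k)))/(k(d+1−k)) (or with minus sign), with K = ℚ(β) ≠ ℚ. Then t = −1/β = k/(d+2) ± √(k(d+1)(d+2−k))/(d+2) is an algebraic integer if and only if k = (d+2)/2 and d ≡ 0 (mod 4). -/

import Mathlib

open Polynomial

theorem lrs_integral_iff (d k : ℕ) (hk2 : 2 ≤ k) (hkd : k ≤ d)
    (hns : ¬ ∃ m : ℕ, m ^ 2 = k * (d + 1) * (d + 2 - k))
    (s : ℝ) (hs : s ^ 2 = (k * (d + 1) * (d + 2 - k) : ℕ)) :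
    IsIntegral ℤ (((k : ℝ) + s) / ((d : ℝ) + 2)) ↔ (2 * k = d + 2 ∧ d % 4 = 0) := by
  set N : ℕ := k * (d + 1) * (d + 2 - k) with hN
  have hd2 : ((d : ℝ) + 2) ≠ 0 := by positivity
  constructor
  · intro hI
    -- s is irrational
    have hNsq : ¬ IsSquare N := by
      rintro ⟨m, hm⟩
      exact hns ⟨m, by rw [hm]; ring⟩
    have hsirr : Irrational s := by
      have h1 : Real.sqrt N = |s| := by
        rw [← hs, Real.sqrt_sq_eq_abs]
      have h2 : Irrational |s| := h1 ▸ irrational_sqrt_natCast_iff.mpr hNsq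
      rcases abs_cases s with ⟨h, _⟩ | ⟨h, _⟩
      · rwa [h] at h2
      · exact Irrational.of_neg (h ▸ h2)
    have htirr : Irrational (((k : ℝ) + s) / ((d : ℝ) + 2)) := by
      have := (hsirr.natCast_add k).div_natCast (m := d + 2) (by omega)
      have hc : (((d + 2 : ℕ) : ℝ)) = (d : ℝ) + 2 := by push_cast; ring
      rwa [hc] at this
    -- the monic rational quadratic annihilating t
    set p : ℚ := 2 * k / (d + 2) with hp
    set q : ℚ := ((k : ℚ) ^ 2 - N) / (d + 2) ^ 2 with hq
    set g : ℚ[X] := X ^ 2 - C p * X + C q with hg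
    have hgmonic : g.Monic := by
      rw [hg]; monicity!
    have hgdeg : g.natDegree = 2 := by
      rw [hg]; compute_degree!
    have hd2q : ((d : ℚ) + 2) ≠ 0 := by positivity
    have hg0 : aeval (((k : ℝ) + s) / ((d : ℝ) + 2)) g = 0 := by
      rw [hg]
      simp only [map_add, map_sub, map_mul, map_pow, aeval_X, aeval_C, eq_ratCast]
      have hpc : ((p : ℝ)) = 2 * k / (d + 2) := by
        rw [hp]; push_cast; ring
      have hqc : ((q : ℝ)) = ((k : ℝ) ^ 2 - N) / (d + 2) ^ 2 := by
        rw [hq]; push_cast; ring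
      rw [hpc, hqc]
      field_simp
      linear_combination hs
    have hQint : IsIntegral ℚ (((k : ℝ) + s) / ((d : ℝ) + 2)) := hI.tower_top
    have hdvd : minpoly ℚ (((k : ℝ) + s) / ((d : ℝ) + 2)) ∣ g := minpoly.dvd ℚ _ hg0
    have hg0' : g ≠ 0 := hgmonic.ne_zero
    have hmdeg_le : (minpoly ℚ (((k : ℝ) + s) / ((d : ℝ) + 2))).natDegree ≤ 2 := by
      simpa [hgdeg] using Polynomial.natDegree_le_of_dvd hdvd hg0'
    have hmdeg_ne1 : (minpoly ℚ (((k : ℝ) + s) / ((d : ℝ) + 2))).natDegree ≠ 1 := by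
      intro h
      rw [minpoly.natDegree_eq_one_iff] at h
      obtain ⟨r, hr⟩ := h
      exact htirr ⟨r, hr⟩
    have hmdeg_pos : 0 < (minpoly ℚ (((k : ℝ) + s) / ((d : ℝ) + 2))).natDegree :=
      minpoly.natDegree_pos hQint
    have hmdeg : (minpoly ℚ (((k : ℝ) + s) / ((d : ℝ) + 2))).natDegree = 2 := by omega
    have hmeq : g = minpoly ℚ (((k : ℝ) + s) / ((d : ℝ) + 2)) :=
      Polynomial.eq_of_monic_of_dvd_of_natDegree_le (minpoly.monic hQint) hgmonic hdvd
        (by omega)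
    -- coefficients of the minimal polynomial are integers
    have hmap : minpoly ℚ (((k : ℝ) + s) / ((d : ℝ) + 2))
        = (minpoly ℤ (((k : ℝ) + s) / ((d : ℝ) + 2))).map (algebraMap ℤ ℚ) :=
      minpoly.isIntegrallyClosed_eq_field_fractions' ℚ hI
    set f : ℤ[X] := minpoly ℤ (((k : ℝ) + s) / ((d : ℝ) + 2)) with hf
    have hcoeff1 : g.coeff 1 = ((f.coeff 1 : ℤ) : ℚ) := by
      rw [hmeq, hmap, Polynomial.coeff_map]; rfl
    have hcoeff0 : g.coeff 0 = ((f.coeff 0 : ℤ) : ℚ) := by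
      rw [hmeq, hmap, Polynomial.coeff_map]; rfl
    have hgc1 : g.coeff 1 = -p := by
      rw [hg]; simp [coeff_X_pow]
    have hgc0 : g.coeff 0 = q := by
      rw [hg]; simp [coeff_X_pow]
    -- From coeff 1: (d+2) ∣ 2k, hence 2k = d+2
    set z : ℤ := f.coeff 1 with hz
    have hz1 : (z : ℚ) = -p := by rw [← hgc1, hcoeff1]
    have hz2 : (z : ℚ) * ((d : ℚ) + 2) = -(2 * k) := by
      rw [hz1, hp]; field_simp
    have hz3 : z * ((d : ℤ) + 2) = -(2 * k) := by
      exact_mod_cast hz2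
    have hdk : 2 * k = d + 2 := by
      have h1 : (2 : ℤ) * k ≤ 2 * d := by
        have : (k : ℤ) ≤ d := by exact_mod_cast hkd
        linarith
      have h2 : (4 : ℤ) ≤ 2 * k := by
        have : (2 : ℤ) ≤ k := by exact_mod_cast hk2
        linarith
      have hzneg : z = -1 := by nlinarith [hz3]
      have : ((d : ℤ) + 2) = 2 * k := by rw [hzneg] at hz3; linarith
      exact_mod_cast this.symm
    refine ⟨hdk, ?_⟩
    -- From coeff 0: 4 ∣ d
    set w : ℤ := f.coeff 0 with hw
    have hw1 : (w : ℚ) = q := by rw [← hgc0, hcoeff0]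
    have hkk : d + 2 - k = k := by omega
    have hNval : (N : ℚ) = (k : ℚ) * (d + 1) * k := by
      rw [hN, hkk]; push_cast; ring
    have hkq0 : (k : ℚ) ≠ 0 := by positivity
    have hw2 : (w : ℚ) * 4 = -(d : ℚ) := by
      have hdq : ((d : ℚ) + 2) = 2 * k := by exact_mod_cast congrArg (Nat.cast : ℕ → ℚ) hdk.symm
      rw [hq, hNval] at hw1
      rw [hdq] at hw1
      field_simp at hw1
      have h : ((k:ℚ))^2 * ((w:ℚ) * 4) = ((k:ℚ))^2 * (-(d:ℚ)) := by linear_combination ((k:ℚ))^2 * hw1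
      exact mul_left_cancel₀ (pow_ne_zero 2 hkq0) h
    have hw3 : w * 4 = -(d : ℤ) := by exact_mod_cast hw2
    have : (d : ℤ) = 4 * (-w) := by linarith
    have hd4 : d = 4 * (-w).toNat := by
      have hwle : (0 : ℤ) ≤ -w := by
        have : (0 : ℤ) ≤ d := Int.natCast_nonneg d
        linarith
      omega
    omega
  · rintro ⟨hdk, hd4⟩
    -- k = 2j+1, d = 4j
    obtain ⟨j, hj⟩ : ∃ j, d = 4 * j := ⟨d / 4, by omega⟩
    have hkj : k = 2 * j + 1 := by omega
    have hkk : d + 2 - k = k := by omega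
    refine ⟨X ^ 2 - X - C (j : ℤ), ?_, ?_⟩
    · monicity!
    · simp only [eval₂_sub, eval₂_pow, eval₂_X, eval₂_C, eval₂_natCast, eq_intCast, Int.cast_natCast]
      have hsN : s ^ 2 = (k : ℝ) * (d + 1) * k := by
        rw [hs, hN, hkk]; push_cast; ring
      have hdr : (d : ℝ) = 4 * j := by exact_mod_cast congrArg (Nat.cast : ℕ → ℝ) hj
      have hkr : (k : ℝ) = 2 * j + 1 := by exact_mod_cast congrArg (Nat.cast : ℕ → ℝ) hkj
      rw [hdr, hkr] at hsN ⊢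
      have h42 : (4 * (j:ℝ) + 2) ≠ 0 := by positivity
      field_simp
      linear_combination hsN
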